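/- Every locally constant, compactly supported k-valued function on Y extends to a locally constant, compactly supported k-valued function on X. That is, if h : Y → k is locally constant with compact support, then there exists a locally constant, compactly supported f : X → k with f(y) = h(y) for all y ∈ Y. (Equivalently, the restriction map C_c^∞(X, k) → C_c^∞(Y, k) is surjective.) -/

import Mathlib

open Set

/-- The indicator of a clopen set with a constant value is locally constant. -/
lemma isLocallyConstant_indicator_clopen {X k : Type*} [TopologicalSpace X] [Zero k]
    {W : Set X} (hW : IsClopen W) (c : k) :
    IsLocallyConstant (W.indicator fun _ => c) := by
  intro s
  by_cases hc : c ∈ s <;> by_cases h0 : (0 : k) ∈ s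
  · convert isOpen_univ
    ext x; simp only [mem_preimage, mem_univ, iff_true]
    by_cases hx : x ∈ W
    · rwa [indicator_of_mem hx]
    · rwa [indicator_of_notMem hx]
  · convert hW.2
    ext x; simp only [mem_preimage]
    by_cases hx : x ∈ W
    · rw [indicator_of_mem hx]; simp [hx, hc]
    · rw [indicator_of_notMem hx]; simp [hx, h0]
  · convert hW.compl.2
    ext x; simp only [mem_preimage, mem_compl_iff]
    by_cases hx : x ∈ W
    · rw [indicator_of_mem hx]; simp [hx, hc]
    · rw [indicator_of_notMem hx]; simp [hx, h0]
  · convert isOpen_empty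
    ext x; simp only [mem_preimage, mem_empty_iff_false, iff_false]
    by_cases hx : x ∈ W
    · rw [indicator_of_mem hx]; exact fun hmem => hc hmem
    · rw [indicator_of_notMem hx]; exact fun hmem => h0 hmem

/-- Finite sums of locally constant functions are locally constant. -/
lemma isLocallyConstant_finset_sum {ι X M : Type*} [TopologicalSpace X] [AddCommMonoid M]
    (s : Finset ι) (g : ι → X → M) (hg : ∀ i, IsLocallyConstant (g i)) :
    IsLocallyConstant (fun x => ∑ i ∈ s, g i x) := by
  classical
  induction s using Finset.induction_on with
  | empty => simp only [Finset.sum_empty]; exact IsLocallyConstant.const 0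
  | insert _ _ hnot ih =>
      simp only [Finset.sum_insert hnot]
      exact (hg _).add ih

/-- Every locally constant, compactly supported `k`-valued function on a closed subset
`Y` of a locally compact, Hausdorff, totally disconnected space `X` extends to a
locally constant, compactly supported function on `X`; i.e. the restriction map
`C_c^∞(X, k) → C_c^∞(Y, k)` is surjective. -/
theorem extend_locallyConstant_compactSupport
    (X : Type*) [TopologicalSpace X] [LocallyCompactSpace X] [T2Space X]
    [TotallyDisconnectedSpace X]
    (Y : Set X) (hY : IsClosed Y)
    (k : Type*) [Field k]
    (h : Y → k) (hlc : IsLocallyConstant h) (hcs : HasCompactSupport h) :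
    ∃ f : X → k, IsLocallyConstant f ∧ HasCompactSupport f ∧ ∀ y : Y, f y = h y := by
  classical
  -- the support, as a compact subset of X
  set K : Set X := Subtype.val '' tsupport h with hKdef
  have hK : IsCompact K := hcs.image continuous_subtype_val
  -- for each y : Y, choose a compact clopen nbhd of ↑y in X on which h is constant
  have key : ∀ y : Y, ∃ V : Set X, IsClopen V ∧ IsCompact V ∧ (y : X) ∈ V ∧
      ∀ z : Y, (z : X) ∈ V → h z = h y := by
    intro y
    have hopen : IsOpen (h ⁻¹' {h y}) := hlc {h y}
    obtain ⟨U, hU, hUeq⟩ := isOpen_induced_iff.mp hopen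
    have hyU : (y : X) ∈ U := by
      have : y ∈ h ⁻¹' {h y} := rfl
      rw [← hUeq] at this
      exact this
    obtain ⟨s, hs_comp, hxs, hsU⟩ := exists_compact_subset hU hyU
    obtain ⟨V, hVclopen, hyV, hVsub⟩ :=
      loc_compact_Haus_tot_disc_of_zero_dim.mem_nhds_iff.1 (isOpen_interior.mem_nhds hxs)
    refine ⟨V, hVclopen, hs_comp.of_isClosed_subset hVclopen.1
      (hVsub.trans interior_subset), hyV, ?_⟩
    intro z hz
    have hzU : (z : X) ∈ U := hsU (interior_subset (hVsub hz))
    have : z ∈ h ⁻¹' {h y} := by rw [← hUeq]; exact hzU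
    exact this
  choose V hVclopen hVcomp hVmem hVconst using key
  -- finite subcover of K
  have hcover : K ⊆ ⋃ y : Y, V y := by
    rintro x ⟨y, hy, rfl⟩
    exact mem_iUnion.2 ⟨y, hVmem y⟩
  obtain ⟨t, ht⟩ := hK.elim_finite_subcover (fun y : Y => V y) (fun y => (hVclopen y).2) hcover
  -- index the finitely many pieces by Fin n via a list
  set L : List Y := t.toList with hL
  set n : ℕ := L.length with hn
  set V' : Fin n → Set X := fun i => V (L.get i) with hV'
  set c : Fin n → k := fun i => h (L.get i) with hc
  -- disjointify
  set W : Fin n → Set X := fun i => V' i \ ⋃ j : Fin n, ⋃ _ : j < i, V' j with hW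
  have hWclopen : ∀ i, IsClopen (W i) :=
    fun i => (hVclopen _).diff (isClopen_iUnion_of_finite
      (fun j => isClopen_iUnion_of_finite (fun _ => hVclopen _)))
  have hWsubV : ∀ i, W i ⊆ V' i := fun i => diff_subset
  have hWdisj : ∀ i j : Fin n, i ≠ j → ∀ x, x ∈ W i → x ∉ W j := by
    intro i j hij x hxi hxj
    rcases lt_or_gt_of_ne hij with hlt | hlt
    · exact hxj.2 (mem_iUnion.2 ⟨i, mem_iUnion.2 ⟨hlt, hxi.1⟩⟩)
    · exact hxi.2 (mem_iUnion.2 ⟨j, mem_iUnion.2 ⟨hlt, hxj.1⟩⟩)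
  -- if x is in some V' i then x is in some W i
  have hWcover : ∀ x : X, (∃ i, x ∈ V' i) → ∃ i, x ∈ W i ∧ x ∈ V' i := by
    intro x hx
    have hex : ∃ m : ℕ, ∃ hm : m < n, x ∈ V' ⟨m, hm⟩ := by
      obtain ⟨i, hi⟩ := hx
      exact ⟨i.1, i.2, by simpa using hi⟩
    obtain ⟨hm, hxm⟩ := Nat.find_spec hex
    refine ⟨⟨Nat.find hex, hm⟩, ⟨hxm, ?_⟩, hxm⟩
    intro hmem
    obtain ⟨j, hj⟩ := mem_iUnion.1 hmem
    obtain ⟨hjm, hxj⟩ := mem_iUnion.1 hj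
    exact Nat.find_min hex (by exact_mod_cast hjm) ⟨j.2, by simpa using hxj⟩
  -- the extension
  set f : X → k := fun x => ∑ i : Fin n, (W i).indicator (fun _ => c i) x with hf
  refine ⟨f, ?_, ?_, ?_⟩
  · exact isLocallyConstant_finset_sum Finset.univ _
      (fun i => isLocallyConstant_indicator_clopen (hWclopen i) (c i))
  · -- compact support
    have hCcomp : IsCompact (⋃ i : Fin n, V' i) := isCompact_iUnion (fun i => hVcomp _)
    refine HasCompactSupport.intro hCcomp ?_
    intro x hx
    have hnmem : ∀ i : Fin n, x ∉ W i := by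
      intro i hxi
      exact hx (mem_iUnion.2 ⟨i, hWsubV i hxi⟩)
    show (∑ i : Fin n, (W i).indicator (fun _ => c i) x) = 0
    exact Finset.sum_eq_zero (fun i _ => indicator_of_notMem (hnmem i) _)
  · -- agreement on Y
    intro y
    by_cases hy : ∃ i, (y : X) ∈ V' i
    · obtain ⟨i, hyW, hyV⟩ := hWcover _ hy
      have hfy : f y = c i := by
        show (∑ j : Fin n, (W j).indicator (fun _ => c j) (y : X)) = c i
        rw [Finset.sum_eq_single i]
        · exact indicator_of_mem hyW _
        · intro j _ hji
          exact indicator_of_notMem (fun hyj => hWdisj i j hji.symm _ hyW hyj) _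
        · intro hi; exact absurd (Finset.mem_univ i) hi
      rw [hfy]
      exact (hVconst (L.get i) y hyV).symm
    · have hfy : f y = 0 := by
        show (∑ j : Fin n, (W j).indicator (fun _ => c j) (y : X)) = 0
        exact Finset.sum_eq_zero
          (fun i _ => indicator_of_notMem (fun hyi => hy ⟨i, hWsubV i hyi⟩) _)
      rw [hfy]
      by_contra hne
      have hy0 : h y ≠ 0 := fun h0 => hne (by rw [h0])
      have hyK : (y : X) ∈ K := ⟨y, subset_tsupport h hy0, rfl⟩
      have hmem := ht hyK
      simp only [mem_iUnion] at hmem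
      obtain ⟨s, hst, hsy⟩ := hmem
      have hsL : s ∈ L := by rwa [hL, Finset.mem_toList]
      obtain ⟨i, hi⟩ := List.mem_iff_get.1 hsL
      refine hy ⟨i, ?_⟩
      show (y : X) ∈ V (L.get i)
      rw [hi]; exact hsy
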